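/- Define f : ℝ → ℝ by f(t) = t^{−1/2}·|log t|^{−1} for t ∈ (0, 1/2) and f(t) = 0 otherwise. Then: (a) f ∈ L²(ℝ), i.e. ∫_0^{1/2} t^{−1}·(log t)^{−2} dt < ∞; and (b) the double integral ∫_{(0,1/2)} ∫_{(0,1/2)} (log|t−s|)² / ( t·s·(log t)²·(log s)² ) ds dt diverges, i.e. equals +∞. -/

import Mathlib

open MeasureTheory ENNReal Set

lemma aux_deriv1 {t : ℝ} (h0 : 0 < t) (h1 : t < 1) :
    HasDerivAt (fun x : ℝ => -(Real.log x)⁻¹) (t⁻¹ * ((Real.log t) ^ 2)⁻¹) t := by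
  have hlt : Real.log t < 0 := Real.log_neg h0 h1
  have h := ((Real.hasDerivAt_log h0.ne').inv hlt.ne).neg
  exact h.congr_deriv (by ring)

lemma aux_intOn : IntegrableOn (fun t : ℝ => t⁻¹ * ((Real.log t) ^ 2)⁻¹)
    (Set.Ioo 0 (1/2)) volume := by
  have hc : ContinuousOn (fun x : ℝ => -(Real.log x)⁻¹) (Set.Icc 0 (1/2)) := by
    intro x hx
    rcases eq_or_lt_of_le hx.1 with h0 | h0
    · have h1 : Filter.Tendsto (fun x : ℝ => -(Real.log x)⁻¹) (nhdsWithin 0 (Set.Ioi 0))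
          (nhds 0) := by
        have h2 : Filter.Tendsto (fun x : ℝ => -Real.log x) (nhdsWithin 0 (Set.Ioi 0))
            Filter.atTop :=
          Filter.tendsto_neg_atBot_atTop.comp Real.tendsto_log_nhdsGT_zero
        have h3 := h2.inv_tendsto_atTop
        simpa [Pi.inv_def, inv_neg] using h3
      have hsub : Set.Icc (0:ℝ) (1/2) ⊆ insert 0 (Set.Ioi 0) := by
        intro y hy
        rcases eq_or_lt_of_le hy.1 with h | h
        · exact Or.inl h.symm
        · exact Or.inr h
      subst h0
      show Filter.Tendsto _ (nhdsWithin 0 (Set.Icc (0:ℝ) (1/2))) _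
      have hx0 : (fun x : ℝ => -(Real.log x)⁻¹) 0 = 0 := by
        simp [Real.log_zero]
      rw [hx0]
      refine Filter.Tendsto.mono_left ?_ (nhdsWithin_mono _ hsub)
      rw [nhdsWithin_insert]
      refine Filter.Tendsto.sup ?_ h1
      simpa [hx0] using tendsto_pure_nhds (fun x : ℝ => -(Real.log x)⁻¹) 0
    · have hlog : Real.log x ≠ 0 := by
        have : Real.log x < 0 := Real.log_neg h0 (by linarith [hx.2])
        exact this.ne
      exact (((Real.continuousAt_log h0.ne').inv₀ hlog).neg).continuousWithinAt
  have h := intervalIntegral.integrableOn_deriv_of_nonneg hc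
      (fun x hx => aux_deriv1 hx.1 (by linarith [hx.2]))
      (fun x hx => mul_nonneg (inv_nonneg.2 hx.1.le) (inv_nonneg.2 (sq_nonneg _)))
  exact h.mono_set Set.Ioo_subset_Ioc_self

lemma aux_inv_lint {a b : ℝ} (ha : 0 < a) (hab : a ≤ b) {c : ℝ} (hc : 0 ≤ c) :
    ∫⁻ s in Set.Ioo a b, ENNReal.ofReal (c * s⁻¹)
      = ENNReal.ofReal (c * (Real.log b - Real.log a)) := by
  have hb : 0 < b := ha.trans_le hab
  have hint : IntegrableOn (fun s : ℝ => c * s⁻¹) (Set.Ioo a b) volume := by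
    have hcont : ContinuousOn (fun s : ℝ => c * s⁻¹) (Set.Icc a b) :=
      continuousOn_const.mul (continuousOn_id.inv₀ fun x hx => (ha.trans_le hx.1).ne')
    exact (hcont.integrableOn_Icc).mono_set Set.Ioo_subset_Icc_self
  have hnn : 0 ≤ᵐ[volume.restrict (Set.Ioo a b)] fun s : ℝ => c * s⁻¹ := by
    refine (ae_restrict_iff' measurableSet_Ioo).2 (Filter.Eventually.of_forall fun s hs => ?_)
    exact mul_nonneg hc (inv_nonneg.2 (ha.trans hs.1).le)
  rw [← ofReal_integral_eq_lintegral_ofReal hint hnn]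
  congr 1
  rw [← integral_Ioc_eq_integral_Ioo, ← intervalIntegral.integral_of_le hab,
    intervalIntegral.integral_const_mul, integral_inv_of_pos ha hb,
    Real.log_div hb.ne' ha.ne']

lemma aux_div_lint {a : ℝ} (ha : 0 < a) (hab : a ≤ 1/2) :
    ∫⁻ t in Set.Ioo a (1/2), ENNReal.ofReal ((4 * (t * (-Real.log t)))⁻¹)
      = ENNReal.ofReal ((Real.log (-Real.log a) - Real.log (Real.log 2)) / 4) := by
  have key : ∀ x ∈ Set.Icc a (1/2),
      HasDerivAt (fun y : ℝ => -Real.log (-Real.log y) / 4) ((4 * (x * (-Real.log x)))⁻¹) x := by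
    intro x hx
    have hx0 : 0 < x := ha.trans_le hx.1
    have hxl : Real.log x < 0 := Real.log_neg hx0 (by linarith [hx.2])
    have h1 := (Real.hasDerivAt_log hx0.ne').neg
    have h2 := (h1.log (by simpa using hxl.ne)).neg.div_const 4
    exact h2.congr_deriv (by simp only [Pi.neg_apply]; ring)
  have hpos : ∀ x ∈ Set.Icc a (1/2), 0 < 4 * (x * (-Real.log x)) := by
    intro x hx
    have hx0 : 0 < x := ha.trans_le hx.1
    have hxl : Real.log x < 0 := Real.log_neg hx0 (by linarith [hx.2])
    have : 0 < -Real.log x := by linarith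
    positivity
  have hcont : ContinuousOn (fun t : ℝ => (4 * (t * (-Real.log t)))⁻¹) (Set.Icc a (1/2)) := by
    refine ContinuousOn.inv₀ ?_ fun x hx => (hpos x hx).ne'
    refine continuousOn_const.mul (continuousOn_id.mul ?_)
    refine ContinuousOn.neg ?_
    exact Real.continuousOn_log.mono fun x hx => by
      simpa using (ha.trans_le hx.1).ne'
  have hInt : IntervalIntegrable (fun t : ℝ => (4 * (t * (-Real.log t)))⁻¹) volume a (1/2) :=
    (hcont.mono (by rw [Set.uIcc_of_le hab])).intervalIntegrable
  have hftc := intervalIntegral.integral_eq_sub_of_hasDerivAt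
      (fun x hx => key x (by rwa [Set.uIcc_of_le hab] at hx)) hInt
  have hIoo : IntegrableOn (fun t : ℝ => (4 * (t * (-Real.log t)))⁻¹) (Set.Ioo a (1/2)) volume :=
    (hcont.integrableOn_Icc).mono_set Set.Ioo_subset_Icc_self
  have hnn : 0 ≤ᵐ[volume.restrict (Set.Ioo a (1/2))]
      fun t : ℝ => (4 * (t * (-Real.log t)))⁻¹ := by
    refine (ae_restrict_iff' measurableSet_Ioo).2 (Filter.Eventually.of_forall fun t ht => ?_)
    exact le_of_lt (inv_pos.2 (hpos t ⟨ht.1.le, ht.2.le⟩))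
  rw [← ofReal_integral_eq_lintegral_ofReal hIoo hnn]
  congr 1
  rw [← integral_Ioc_eq_integral_Ioo, ← intervalIntegral.integral_of_le hab, hftc]
  have h12 : -Real.log (1/2 : ℝ) = Real.log 2 := by
    rw [one_div, Real.log_inv]; ring
  rw [← h12]
  ring

lemma aux_pt {t s : ℝ} (ht1 : 0 < t) (ht2 : t < 1/2) (hs1 : t^2 < s) (hs2 : s < t) :
    (4 * (t * (Real.log t)^2))⁻¹ * s⁻¹
      ≤ (Real.log |t - s|)^2 / (t * s * (Real.log t)^2 * (Real.log s)^2) := by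
  have hs0 : 0 < s := (pow_pos ht1 2).trans hs1
  have hL : Real.log t < 0 := Real.log_neg ht1 (by linarith)
  have hM : Real.log s < 0 := Real.log_neg hs0 (by linarith)
  have h2L : 2 * Real.log t < Real.log s := by
    have := Real.log_lt_log (pow_pos ht1 2) hs1
    rwa [Real.log_pow, Nat.cast_ofNat] at this
  have habs : |t - s| = t - s := abs_of_pos (by linarith)
  have hN : Real.log (t - s) ≤ Real.log t := Real.log_le_log (by linarith) (by linarith)
  have hL2 : 0 < (Real.log t)^2 := by nlinarith
  have hM2 : 0 < (Real.log s)^2 := by nlinarith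
  have hD : 0 < t * s * (Real.log t)^2 * (Real.log s)^2 := by positivity
  rw [habs, le_div_iff₀ hD]
  have hEq : (4 * (t * (Real.log t)^2))⁻¹ * s⁻¹ * (t * s * (Real.log t)^2 * (Real.log s)^2)
      = (Real.log s)^2 / 4 := by
    field_simp
    field_simp [hL.ne]
  rw [hEq]
  have hLN : (Real.log t)^2 ≤ (Real.log (t - s))^2 := by nlinarith
  have hML : (Real.log s)^2 ≤ 4 * (Real.log t)^2 := by nlinarith
  linarith

lemma aux_inner {t : ℝ} (ht1 : 0 < t) (ht2 : t < 1/2) :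
    ENNReal.ofReal ((4 * (t * (-Real.log t)))⁻¹) ≤
    ∫⁻ s in Set.Ioo (0:ℝ) (1/2), ENNReal.ofReal
      ((Real.log |t - s|) ^ 2 / (t * s * (Real.log t) ^ 2 * (Real.log s) ^ 2)) := by
  have hL : Real.log t < 0 := Real.log_neg ht1 (by linarith)
  have ht2lt : t^2 < t := by nlinarith
  have hc : (0:ℝ) ≤ (4 * (t * (Real.log t)^2))⁻¹ := by positivity
  have hcalc : ENNReal.ofReal ((4 * (t * (-Real.log t)))⁻¹)
      = ∫⁻ s in Set.Ioo (t^2) t, ENNReal.ofReal ((4 * (t * (Real.log t)^2))⁻¹ * s⁻¹) := by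
    rw [aux_inv_lint (pow_pos ht1 2) ht2lt.le hc]
    congr 1
    rw [Real.log_pow]
    have hLt : Real.log t ≠ 0 := hL.ne
    field_simp
    ring
  rw [hcalc]
  calc ∫⁻ s in Set.Ioo (t^2) t, ENNReal.ofReal ((4 * (t * (Real.log t)^2))⁻¹ * s⁻¹)
      ≤ ∫⁻ s in Set.Ioo (t^2) t, ENNReal.ofReal
        ((Real.log |t - s|) ^ 2 / (t * s * (Real.log t) ^ 2 * (Real.log s) ^ 2)) := by
        refine setLIntegral_mono' measurableSet_Ioo fun s hs => ?_
        exact ENNReal.ofReal_le_ofReal (aux_pt ht1 ht2 hs.1 hs.2)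
    _ ≤ ∫⁻ s in Set.Ioo (0:ℝ) (1/2), ENNReal.ofReal
        ((Real.log |t - s|) ^ 2 / (t * s * (Real.log t) ^ 2 * (Real.log s) ^ 2)) := by
        refine lintegral_mono_set ?_
        exact Set.Ioo_subset_Ioo (by positivity) (by linarith)

theorem stmt7 :
    MemLp (fun t : ℝ =>
        if 0 < t ∧ t < 1 / 2 then t ^ (-(1 : ℝ) / 2) * |Real.log t|⁻¹ else 0) 2 volume ∧
    (∫⁻ t in Set.Ioo (0 : ℝ) (1 / 2), ENNReal.ofReal (t⁻¹ * ((Real.log t) ^ 2)⁻¹)) < ∞ ∧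
    (∫⁻ t in Set.Ioo (0 : ℝ) (1 / 2), ∫⁻ s in Set.Ioo (0 : ℝ) (1 / 2),
        ENNReal.ofReal
          ((Real.log |t - s|) ^ 2 / (t * s * (Real.log t) ^ 2 * (Real.log s) ^ 2))) = ∞ := by
  refine ⟨?_, ?_, ?_⟩
  · -- part (a)
    have hfeq : (fun t : ℝ =>
        if 0 < t ∧ t < 1 / 2 then t ^ (-(1 : ℝ) / 2) * |Real.log t|⁻¹ else 0)
        = fun t : ℝ => if 0 < t ∧ t < 1 / 2 then
            Real.exp (Real.log t * (-(1 : ℝ) / 2)) * |Real.log t|⁻¹ else 0 := by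
      funext t
      by_cases h : 0 < t ∧ t < 1/2
      · rw [if_pos h, if_pos h, Real.rpow_def_of_pos h.1]
      · rw [if_neg h, if_neg h]
    rw [hfeq]
    have hmeas : Measurable (fun t : ℝ => if 0 < t ∧ t < 1 / 2 then
        Real.exp (Real.log t * (-(1 : ℝ) / 2)) * |Real.log t|⁻¹ else 0) := by
      refine Measurable.ite ?_ ?_ measurable_const
      · exact (measurableSet_Ioi.inter measurableSet_Iio :
          MeasurableSet (Set.Ioi (0:ℝ) ∩ Set.Iio (1/2)))
      · exact ((Real.measurable_log.mul measurable_const).exp).mul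
          (Real.measurable_log.abs.inv)
    rw [memLp_two_iff_integrable_sq hmeas.aestronglyMeasurable]
    have hfun : (fun t : ℝ =>
        (if 0 < t ∧ t < 1 / 2 then
          Real.exp (Real.log t * (-(1 : ℝ) / 2)) * |Real.log t|⁻¹ else 0) ^ 2)
        = Set.indicator (Set.Ioo 0 (1/2)) (fun t : ℝ => t⁻¹ * ((Real.log t) ^ 2)⁻¹) := by
      funext t
      by_cases h : 0 < t ∧ t < 1/2
      · rw [if_pos h, Set.indicator_of_mem (show t ∈ Set.Ioo (0:ℝ) (1/2) from h),
          ← Real.rpow_def_of_pos h.1]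
        rw [mul_pow, ← Real.rpow_natCast (t ^ (-(1:ℝ)/2)) 2, ← Real.rpow_mul h.1.le,
          inv_pow, sq_abs]
        norm_num [Real.rpow_neg_one]
      · rw [if_neg h, Set.indicator_of_notMem (show t ∉ Set.Ioo (0:ℝ) (1/2) from h)]
        norm_num
    rw [hfun, integrable_indicator_iff measurableSet_Ioo]
    exact aux_intOn
  · -- part (b)
    exact aux_intOn.lintegral_lt_top
  · -- part (c)
    refine ENNReal.eq_top_of_forall_nnreal_le fun r => ?_
    set c : ℝ := Real.log (Real.log 2) with hc
    set n : ℕ := ⌈4*(r:ℝ) + c⌉₊ with hn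
    set a : ℝ := Real.exp (-(Real.exp (n:ℝ))) with hadef
    have ha : 0 < a := Real.exp_pos _
    have ha2 : a < 1/2 := by
      have h1 : a ≤ Real.exp (-1) := by
        refine Real.exp_le_exp.2 ?_
        have := Real.one_le_exp (by positivity : (0:ℝ) ≤ (n:ℝ))
        linarith
      have h2 : Real.exp (-1) < 1/2 := by
        rw [Real.exp_neg]
        have : (2:ℝ) < Real.exp 1 := by nlinarith [Real.exp_one_gt_d9]
        have h3 := inv_strictAnti₀ (by norm_num : (0:ℝ) < 2) this
        linarith [h3]
      linarith
    have hloga : -Real.log a = Real.exp (n:ℝ) := by rw [hadef, Real.log_exp]; ring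
    calc (r:ℝ≥0∞) = ENNReal.ofReal r := ENNReal.ofReal_coe_nnreal.symm
      _ ≤ ENNReal.ofReal ((Real.log (-Real.log a) - c)/4) := by
          refine ENNReal.ofReal_le_ofReal ?_
          rw [hloga, Real.log_exp]
          have := Nat.le_ceil (4*(r:ℝ) + c)
          rw [← hn] at this
          linarith
      _ = ∫⁻ t in Set.Ioo a (1/2), ENNReal.ofReal ((4 * (t * (-Real.log t)))⁻¹) :=
          (aux_div_lint ha ha2.le).symm
      _ ≤ ∫⁻ t in Set.Ioo a (1/2), ∫⁻ s in Set.Ioo (0 : ℝ) (1/2),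
          ENNReal.ofReal
            ((Real.log |t - s|) ^ 2 / (t * s * (Real.log t) ^ 2 * (Real.log s) ^ 2)) :=
          setLIntegral_mono' measurableSet_Ioo fun t ht => aux_inner (ha.trans ht.1) ht.2
      _ ≤ _ := lintegral_mono_set (Set.Ioo_subset_Ioo ha.le le_rfl)
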